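/- Let H > 0, r > 0, let α : (0,H] → ℝ be continuous with α(x) < 0 and r x ≤ |α(x)| for all x ∈ (0,H], and let δ : (0,H] → ℝ be measurable and bounded with 4‖δ‖_∞² H < r. Then for every V ∈ H¹((0,H); ℂ) with V(0) = 0: ∫_0^H (|V'(x)|² + (δ(x)²/α(x))|V(x)|² − α(x)|V(x)|²) dx ≥ (1 − 4‖δ‖_∞² H / r) ∫_0^H |V'(x)|² dx ≥ 0. -/

import Mathlib

open MeasureTheory

private lemma cs_aux (x : ℝ) (hx : 0 < x) (f : ℝ → ℝ) (hf0 : ∀ t, 0 ≤ f t)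
    (hfm : AEStronglyMeasurable f (volume.restrict (Set.Ioc 0 x)))
    (hf2 : IntegrableOn (fun t => f t ^ 2) (Set.Ioc 0 x)) :
    (∫ t in Set.Ioc (0:ℝ) x, f t) ^ 2 ≤ x * ∫ t in Set.Ioc (0:ℝ) x, f t ^ 2 := by
  set μ := volume.restrict (Set.Ioc (0:ℝ) x) with hμ
  have hpq : Real.HolderConjugate 2 2 := (Real.holderConjugate_iff_eq_conjExponent one_lt_two).2 (by norm_num)
  have hf2' : Integrable (fun t => ‖f t‖ ^ 2) μ := by
    simpa [Real.norm_of_nonneg (hf0 _)] using (show Integrable (fun t => f t ^ 2) μ from hf2)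
  have hfmem : MemLp f (ENNReal.ofReal 2) μ := by
    rw [show ENNReal.ofReal 2 = 2 by norm_num]
    exact (memLp_two_iff_integrable_sq_norm hfm).2 hf2'
  have hgmem : MemLp (fun _ : ℝ => (1:ℝ)) (ENNReal.ofReal 2) μ := memLp_const 1
  have key := integral_mul_le_Lp_mul_Lq_of_nonneg hpq
      (Filter.Eventually.of_forall fun t => hf0 t)
      (Filter.Eventually.of_forall fun _ => zero_le_one) hfmem hgmem
  simp only [mul_one, one_mul] at key
  have h1 : (∫ a, f a ^ (2:ℝ) ∂μ) = ∫ a, f a ^ 2 ∂μ := by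
    congr 1; ext a; rw [show (2:ℝ) = ((2:ℕ):ℝ) by norm_num, Real.rpow_natCast]
  have h2 : (∫ _, (1:ℝ) ^ (2:ℝ) ∂μ) = x := by
    simp [hμ, Real.volume_Ioc, hx.le]
  rw [h1, h2] at key
  have hInn : 0 ≤ ∫ a, f a ^ 2 ∂μ := integral_nonneg fun t => sq_nonneg _
  have hI0 : 0 ≤ ∫ a, f a ∂μ := integral_nonneg fun t => hf0 t
  calc (∫ t in Set.Ioc (0:ℝ) x, f t) ^ 2
      ≤ ((∫ a, f a ^ 2 ∂μ) ^ ((1:ℝ)/2) * x ^ ((1:ℝ)/2)) ^ 2 := by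
        exact pow_le_pow_left₀ hI0 key 2
    _ = x * ∫ t in Set.Ioc (0:ℝ) x, f t ^ 2 := by
        rw [mul_pow, ← Real.rpow_natCast ((∫ a, f a ^ 2 ∂μ) ^ ((1:ℝ)/2)) 2,
          ← Real.rpow_natCast (x ^ ((1:ℝ)/2)) 2,
          ← Real.rpow_mul hInn, ← Real.rpow_mul hx.le]
        norm_num [mul_comm]
        exact Or.inl rfl

/-- The Hardy-type coercivity estimate under the smallness hypothesis (H5)
`4‖δ‖∞² H < r`: for `V ∈ H¹((0,H);ℂ)` with `V(0) = 0`,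
`∫_0^H (|V'|² + (δ²/α)|V|² − α|V|²) ≥ (1 − 4‖δ‖∞²H/r) ∫_0^H |V'|² ≥ 0`. -/
theorem hardy_coercivity_estimate
    (H r Cδ : ℝ) (hH : 0 < H) (hr : 0 < r)
    (α δ : ℝ → ℝ)
    (hαc : ContinuousOn α (Set.Ioc 0 H))
    (hαneg : ∀ x ∈ Set.Ioc (0:ℝ) H, α x < 0)
    (hαr : ∀ x ∈ Set.Ioc (0:ℝ) H, r * x ≤ |α x|)
    (hδm : Measurable δ)
    (hδbd : ∀ x ∈ Set.Ioc (0:ℝ) H, |δ x| ≤ Cδ)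
    (h5 : 4 * Cδ^2 * H < r)
    -- V ∈ H¹((0,H);ℂ) with V(0) = 0, encoded via V = ∫ V' with V' ∈ L²(0,H)
    (V V' : ℝ → ℂ)
    (hV'int : IntervalIntegrable V' volume 0 H)
    (hV'sq : IntervalIntegrable (fun x => ‖V' x‖^2) volume 0 H)
    (hV : ∀ x ∈ Set.Icc (0:ℝ) H, V x = ∫ t in (0:ℝ)..x, V' t)
    (hint : IntervalIntegrable (fun x => α x * ‖V x‖^2) volume 0 H) :
    (1 - 4 * Cδ^2 * H / r) * (∫ x in (0:ℝ)..H, ‖V' x‖^2)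
      ≤ ∫ x in (0:ℝ)..H, (‖V' x‖^2 + (δ x^2 / α x) * ‖V x‖^2 - α x * ‖V x‖^2)
    ∧ 0 ≤ (1 - 4 * Cδ^2 * H / r) * (∫ x in (0:ℝ)..H, ‖V' x‖^2) := by
  have hle : (0:ℝ) ≤ H := hH.le
  set S := Set.Ioc (0:ℝ) H with hS
  set I : ℝ := ∫ x in (0:ℝ)..H, ‖V' x‖^2 with hIdef
  have hV'sqS : IntegrableOn (fun x => ‖V' x‖^2) S :=
    (intervalIntegrable_iff_integrableOn_Ioc_of_le hle).1 hV'sq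
  have hIS : I = ∫ x in S, ‖V' x‖^2 := intervalIntegral.integral_of_le hle
  have hI0 : 0 ≤ I :=
    intervalIntegral.integral_nonneg hle fun x _ => sq_nonneg _
  -- pointwise bound ‖V x‖² ≤ x * I on S
  have hVbd : ∀ x ∈ S, ‖V x‖^2 ≤ x * I := by
    intro x hx
    have hx0 : 0 < x := hx.1
    have hxH : x ≤ H := hx.2
    have hVx : ‖V x‖ ≤ ∫ t in Set.Ioc (0:ℝ) x, ‖V' t‖ := by
      rw [hV x ⟨hx0.le, hxH⟩, ← intervalIntegral.integral_of_le hx0.le]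
      exact intervalIntegral.norm_integral_le_integral_norm hx0.le
    have hsub : Set.Ioc (0:ℝ) x ⊆ S := Set.Ioc_subset_Ioc_right hxH
    have hmono := hV'int.1
    have hcs := cs_aux x hx0 (fun t => ‖V' t‖) (fun t => norm_nonneg _)
      ((hV'int.1.mono_set hsub).aestronglyMeasurable.norm)
      (hV'sqS.mono_set hsub)
    have hsubI : (∫ t in Set.Ioc (0:ℝ) x, ‖V' t‖^2) ≤ I := by
      rw [hIS]
      exact setIntegral_mono_set hV'sqS
        (Filter.Eventually.of_forall fun t => sq_nonneg _)
        (HasSubset.Subset.eventuallyLE hsub)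
    calc ‖V x‖^2 ≤ (∫ t in Set.Ioc (0:ℝ) x, ‖V' t‖)^2 :=
          pow_le_pow_left₀ (norm_nonneg _) hVx 2
      _ ≤ x * ∫ t in Set.Ioc (0:ℝ) x, ‖V' t‖^2 := hcs
      _ ≤ x * I := by exact mul_le_mul_of_nonneg_left hsubI hx0.le
  -- pointwise bounds on g x = δ x ^ 2 / α x * ‖V x‖ ^ 2
  set B : ℝ := Cδ^2 / r * I with hBdef
  have hB0 : 0 ≤ B := mul_nonneg (div_nonneg (sq_nonneg _) hr.le) hI0
  have hgbd : ∀ x ∈ S, -B ≤ δ x^2 / α x * ‖V x‖^2 ∧ δ x^2 / α x * ‖V x‖^2 ≤ 0 := by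
    intro x hx
    have hαx := hαneg x hx
    have hrx : 0 < r * x := mul_pos hr hx.1
    have habs : |α x| = -α x := abs_of_neg hαx
    have hδ2 : δ x^2 ≤ Cδ^2 := by
      rw [← sq_abs]
      exact pow_le_pow_left₀ (abs_nonneg _) (hδbd x hx) 2
    constructor
    · have h1 : δ x^2 / (-α x) ≤ Cδ^2 / (r * x) :=
        div_le_div₀ (sq_nonneg Cδ) hδ2 hrx (habs ▸ hαr x hx)
      have h2 : δ x^2 / (-α x) * ‖V x‖^2 ≤ Cδ^2 / (r * x) * (x * I) :=
        mul_le_mul h1 (hVbd x hx) (sq_nonneg _)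
          (div_nonneg (sq_nonneg _) hrx.le)
      have h3 : Cδ^2 / (r * x) * (x * I) = B := by
        field_simp [hBdef, ne_of_gt hx.1]
        rw [hBdef]; field_simp [hr.ne']
      have h4 : δ x^2 / α x * ‖V x‖^2 = -(δ x^2 / (-α x) * ‖V x‖^2) := by
        field_simp
      rw [h4]
      linarith [h3 ▸ h2]
    · exact mul_nonpos_of_nonpos_of_nonneg
        (div_nonpos_of_nonneg_of_nonpos (sq_nonneg _) hαx.le) (sq_nonneg _)
  -- measurability of x ↦ ‖V x‖² on S
  have hmS : MeasurableSet S := measurableSet_Ioc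
  have hWcont : ContinuousOn (fun x => ∫ t in (0:ℝ)..x, V' t) (Set.Icc 0 H) := by
    have := intervalIntegral.continuousOn_primitive_interval' hV'int (Set.left_mem_uIcc (a := (0:ℝ)) (b := H))
    rwa [Set.uIcc_of_le hle] at this
  have hVm : AEStronglyMeasurable (fun x => ‖V x‖^2) (volume.restrict S) := by
    have h1 : AEStronglyMeasurable (fun x => ‖∫ t in (0:ℝ)..x, V' t‖^2)
        (volume.restrict S) :=
      ((hWcont.mono Set.Ioc_subset_Icc_self).norm.pow 2).aestronglyMeasurable hmS
    refine h1.congr ?_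
    filter_upwards [ae_restrict_mem hmS] with x hx
    rw [hV x ⟨hx.1.le, hx.2⟩]
  have hgm : AEStronglyMeasurable (fun x => δ x^2 / α x * ‖V x‖^2)
      (volume.restrict S) := by
    have hαm : AEMeasurable α (volume.restrict S) := hαc.aemeasurable hmS
    exact ((((hδm.pow_const 2).aemeasurable).div hαm).mul
      hVm.aemeasurable).aestronglyMeasurable
  -- integrability of g on S
  have hgint : IntegrableOn (fun x => δ x^2 / α x * ‖V x‖^2) S := by
    have hconst : IntegrableOn (fun _ : ℝ => B) S := integrableOn_const (lt_top_iff_ne_top.1 (by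
      rw [hS, Real.volume_Ioc]; exact ENNReal.ofReal_lt_top))
    refine Integrable.mono' hconst hgm ?_
    filter_upwards [ae_restrict_mem hmS] with x hx
    rw [Real.norm_eq_abs, abs_le]
    exact ⟨(hgbd x hx).1, le_trans (hgbd x hx).2 hB0⟩
  have hαintS : IntegrableOn (fun x => α x * ‖V x‖^2) S :=
    (intervalIntegrable_iff_integrableOn_Ioc_of_le hle).1 hint
  -- split the integral
  have hsplit : (∫ x in (0:ℝ)..H, (‖V' x‖^2 + (δ x^2 / α x) * ‖V x‖^2 - α x * ‖V x‖^2))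
      = I + (∫ x in S, δ x^2 / α x * ‖V x‖^2) - ∫ x in S, α x * ‖V x‖^2 := by
    have hadd : IntegrableOn (fun x => ‖V' x‖^2 + δ x^2 / α x * ‖V x‖^2) S :=
      hV'sqS.add hgint
    rw [intervalIntegral.integral_of_le hle, hIS]
    rw [integral_sub hadd hαintS, integral_add hV'sqS hgint]
  -- estimate the g-integral
  have hgest : -(B * H) ≤ ∫ x in S, δ x^2 / α x * ‖V x‖^2 := by
    have hconst : ∫ (_ : ℝ) in S, (-B) = -(B * H) := by
      rw [setIntegral_const]
      simp [hS, Real.volume_Ioc, hle, mul_comm]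
    rw [← hconst]
    exact setIntegral_mono_on (integrableOn_const (lt_top_iff_ne_top.1 (by
      rw [hS, Real.volume_Ioc]; exact ENNReal.ofReal_lt_top))) hgint hmS
      fun x hx => (hgbd x hx).1
  have hαest : (∫ x in S, α x * ‖V x‖^2) ≤ 0 :=
    setIntegral_nonpos hmS fun x hx =>
      mul_nonpos_of_nonpos_of_nonneg (hαneg x hx).le (sq_nonneg _)
  -- conclude
  have hcoef : 0 ≤ 1 - 4 * Cδ^2 * H / r := by
    have : 4 * Cδ^2 * H / r < 1 := (div_lt_one hr).2 h5
    linarith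
  constructor
  · rw [hsplit]
    have hBH : B * H ≤ 4 * Cδ^2 * H / r * I := by
      rw [hBdef]
      have h1 : Cδ^2 / r * I * H = Cδ^2 * H / r * I := by ring
      rw [h1]
      have h2 : Cδ^2 * H / r ≤ 4 * Cδ^2 * H / r := by
        have h3 : Cδ^2 * H ≤ 4 * Cδ^2 * H := by nlinarith [sq_nonneg Cδ]
        have := mul_le_mul_of_nonneg_right h3 (inv_nonneg.2 hr.le)
        simpa [div_eq_mul_inv] using this
      exact mul_le_mul_of_nonneg_right h2 hI0
    nlinarith [hgest, hαest]
  · exact mul_nonneg hcoef hI0
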